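/- Let 1 ≤ q < 2, λ₊, λ₋ > 0, μ ≥ 0, and let γ_q = 2/(2-q). If φ : ℝ → ℝ is a 2π-periodic C¹ weak solution of -φ'' - γ_q² φ = μ(λ₊(φ⁺)^{q-1} - λ₋(φ⁻)^{q-1}) on ℝ satisfying φ(0) = φ'(0) = 0, then φ ≡ 0. -/

import Mathlib

/-- The two-phase nonlinearity `λ₊ (s⁺)^{q-1} - λ₋ (s⁻)^{q-1}`, interpreted for `q = 1`
as `λ₊ χ_{s>0} - λ₋ χ_{s<0}`. -/
noncomputable def twoPhase (lp lm q s : ℝ) : ℝ :=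
  if 0 < s then lp * s ^ (q - 1)
  else if s < 0 then -(lm * (-s) ^ (q - 1))
  else 0

open Real Set Filter Topology

/-- Primitive of the two-phase nonlinearity. -/
noncomputable def Fq (lp lm q s : ℝ) : ℝ :=
  if 0 < s then lp * s ^ q / q
  else if s < 0 then lm * (-s) ^ q / q
  else 0

lemma twoPhase_zero (lp lm q : ℝ) : twoPhase lp lm q 0 = 0 := by simp [twoPhase]

lemma Fq_zero (lp lm q : ℝ) : Fq lp lm q 0 = 0 := by simp [Fq]

lemma Fq_nonneg {lp lm q : ℝ} (hlp : 0 ≤ lp) (hlm : 0 ≤ lm) (hq : 0 < q) (s : ℝ) :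
    0 ≤ Fq lp lm q s := by
  unfold Fq
  split_ifs with h1 h2
  · have h : (0:ℝ) ≤ s ^ q := Real.rpow_nonneg h1.le q
    positivity
  · have h : (0:ℝ) ≤ (-s) ^ q := Real.rpow_nonneg (by linarith) q
    positivity
  · exact le_refl 0

lemma twoPhase_neg (lp lm q s : ℝ) : twoPhase lm lp q (-s) = -twoPhase lp lm q s := by
  unfold twoPhase
  rcases lt_trichotomy s 0 with h | h | h
  · simp [h, h.not_gt, neg_pos.mpr h]
  · simp [h]
  · simp [h, h.not_gt, neg_lt_zero.mpr h, (neg_lt_zero.mpr h).not_gt, not_lt.mpr h.le]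

lemma abs_Fq_le {lp lm q : ℝ} (hlp : 0 < lp) (hlm : 0 < lm) (hq : 0 < q) (s : ℝ) :
    |Fq lp lm q s| ≤ (lp + lm) / q * |s| ^ q := by
  unfold Fq
  split_ifs with h1 h2
  · have h : (0:ℝ) ≤ s ^ q := Real.rpow_nonneg h1.le q
    rw [abs_of_nonneg (by positivity), abs_of_pos h1, div_mul_eq_mul_div]
    gcongr
    linarith
  · have h : (0:ℝ) ≤ (-s) ^ q := Real.rpow_nonneg (by linarith) q
    rw [abs_of_nonneg (by positivity), abs_of_neg h2, div_mul_eq_mul_div]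
    gcongr
    linarith
  · have hs : s = 0 := le_antisymm (not_lt.mp h1) (not_lt.mp h2)
    simp [hs, Real.zero_rpow hq.ne']

lemma rpow_le_self_of_le_one {x q : ℝ} (hx : 0 ≤ x) (hx1 : x ≤ 1) (hq : 1 ≤ q) :
    x ^ q ≤ x := by
  rcases hx.eq_or_lt with h | h
  · rw [← h, Real.zero_rpow (by linarith)]
  · calc x ^ q ≤ x ^ (1:ℝ) := Real.rpow_le_rpow_of_exponent_ge h hx1 hq
    _ = x := Real.rpow_one x

/-- Derivative of `Fq` away from the origin. -/
lemma hasDerivAt_Fq {lp lm q : ℝ} (hq : 1 ≤ q) {s : ℝ} (hs : s ≠ 0) :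
    HasDerivAt (Fq lp lm q) (twoPhase lp lm q s) s := by
  have hq0 : q ≠ 0 := by linarith
  rcases hs.lt_or_gt with h | h
  · have hev : Fq lp lm q =ᶠ[nhds s] fun u => lm * (-u) ^ q / q := by
      filter_upwards [Iio_mem_nhds h] with u hu
      have hu' : u < 0 := mem_Iio.mp hu
      simp [Fq, hu', hu'.not_gt]
    have h1 : HasDerivAt (fun u : ℝ => (-u) ^ q) (q * (-s) ^ (q - 1) * (-1)) s := by
      have := (Real.hasDerivAt_rpow_const (x := -s) (p := q)
        (Or.inl (neg_ne_zero.mpr hs))).comp s (hasDerivAt_neg s)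
      simpa [Function.comp_def] using this
    have hd : HasDerivAt (fun u : ℝ => lm * (-u) ^ q / q) (-(lm * (-s) ^ (q - 1))) s := by
      have := (h1.const_mul lm).div_const q
      refine (this).congr_deriv ?_
      field_simp
    have hT : twoPhase lp lm q s = -(lm * (-s) ^ (q - 1)) := by
      simp [twoPhase, h, h.not_gt]
    rw [hT]
    exact hd.congr_of_eventuallyEq hev
  · have hev : Fq lp lm q =ᶠ[nhds s] fun u => lp * u ^ q / q := by
      filter_upwards [Ioi_mem_nhds h] with u hu
      have hu' : 0 < u := mem_Ioi.mp hu
      simp [Fq, hu']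
    have h1 : HasDerivAt (fun u : ℝ => u ^ q) (q * s ^ (q - 1)) s :=
      Real.hasDerivAt_rpow_const (Or.inl hs)
    have hd : HasDerivAt (fun u : ℝ => lp * u ^ q / q) (lp * s ^ (q - 1)) s := by
      have := (h1.const_mul lp).div_const q
      refine (this).congr_deriv ?_
      field_simp
    have hT : twoPhase lp lm q s = lp * s ^ (q - 1) := by simp [twoPhase, h]
    rw [hT]
    exact hd.congr_of_eventuallyEq hev

/-- Derivative of `Fq` at the origin, for `q > 1`. -/
lemma hasDerivAt_Fq_zero {lp lm q : ℝ} (hlp : 0 < lp) (hlm : 0 < lm) (hq : 1 < q) :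
    HasDerivAt (Fq lp lm q) 0 0 := by
  have hq0 : (0:ℝ) < q := by linarith
  rw [hasDerivAt_iff_tendsto_slope]
  apply squeeze_zero_norm' (a := fun t : ℝ => (lp + lm) / q * |t| ^ (q - 1))
  · filter_upwards [self_mem_nhdsWithin] with t ht
    have ht' : t ≠ 0 := ht
    have htabs : |t| ≠ 0 := abs_ne_zero.mpr ht'
    rw [slope_def_field, Fq_zero, sub_zero, sub_zero]
    rw [Real.norm_eq_abs, abs_div]
    have h1 : |Fq lp lm q t| ≤ (lp + lm) / q * |t| ^ q := abs_Fq_le hlp hlm hq0 t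
    have h2 : (lp + lm) / q * |t| ^ (q - 1) = (lp + lm) / q * |t| ^ q / |t| := by
      rw [Real.rpow_sub_one htabs, mul_div_assoc]
    rw [h2]
    gcongr
  · have hcont : ContinuousAt (fun u : ℝ => u ^ (q - 1)) 0 :=
      Real.continuousAt_rpow_const 0 (q - 1) (Or.inr (by linarith))
    have h0 : (0:ℝ) ^ (q - 1) = 0 := Real.zero_rpow (by linarith)
    have htend : Filter.Tendsto (fun t : ℝ => (lp + lm) / q * |t| ^ (q - 1))
        (nhds 0) (nhds 0) := by
      have habs : Filter.Tendsto (fun t : ℝ => |t|) (nhds (0:ℝ)) (nhds 0) := by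
        simpa using continuous_abs.tendsto (0:ℝ)
      have := (hcont.tendsto.comp habs).const_mul ((lp + lm) / q)
      simpa [h0, Function.comp_def] using this
    exact htend.mono_left nhdsWithin_le_nhds

/-- Derivative of `Fq ∘ φ` at a point where both `φ` and its derivative vanish. -/
lemma hasDerivAt_Fq_comp_zero {lp lm q : ℝ} (hlp : 0 < lp) (hlm : 0 < lm) (hq : 1 ≤ q)
    {φ : ℝ → ℝ} {x : ℝ} (hφx : φ x = 0) (hd : HasDerivAt φ 0 x) :
    HasDerivAt (fun t => Fq lp lm q (φ t)) 0 x := by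
  have hq0 : (0:ℝ) < q := by linarith
  have hC0 : 0 ≤ (lp + lm) / q := by positivity
  have hslope : Filter.Tendsto (slope φ x) (nhdsWithin x {x}ᶜ) (nhds 0) :=
    hasDerivAt_iff_tendsto_slope.mp hd
  have hcont : Filter.Tendsto φ (nhds x) (nhds 0) := by
    have := hd.continuousAt
    rwa [ContinuousAt, hφx] at this
  have h1 : ∀ᶠ t in nhdsWithin x {x}ᶜ, |φ t| ≤ 1 := by
    have h' : ∀ᶠ t in nhds x, φ t ∈ Ioo (-1:ℝ) 1 :=
      hcont (Ioo_mem_nhds (by norm_num) (by norm_num))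
    refine (h'.mono ?_).filter_mono nhdsWithin_le_nhds
    intro t ht
    rw [abs_le]
    exact ⟨ht.1.le, ht.2.le⟩
  rw [hasDerivAt_iff_tendsto_slope]
  apply squeeze_zero_norm' (a := fun t => (lp + lm) / q * |slope φ x t|)
  · filter_upwards [h1, self_mem_nhdsWithin] with t ht hne
    have hne' : t ≠ x := hne
    rw [Real.norm_eq_abs, slope_def_field, slope_def_field, hφx, sub_zero, Fq_zero, sub_zero,
      abs_div, abs_div, ← mul_div_assoc]
    gcongr
    calc |Fq lp lm q (φ t)| ≤ (lp + lm) / q * |φ t| ^ q := abs_Fq_le hlp hlm hq0 (φ t)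
      _ ≤ (lp + lm) / q * |φ t| := by
          have := _root_.rpow_le_self_of_le_one (abs_nonneg (φ t)) ht hq
          exact mul_le_mul_of_nonneg_left this hC0
  · have := hslope.abs.const_mul ((lp + lm) / q)
    simpa using this

/-- No transversal upward zero-crossing for `q = 1`, `μ > 0`. -/
lemma no_cross {lp lm μ c : ℝ} (hlp : 0 < lp) (hμ : 0 < μ) (hc : 0 ≤ c)
    (φ φ' : ℝ → ℝ)
    (hφ : ∀ x, HasDerivAt φ (φ' x) x)
    (hφ' : ∀ x, HasDerivAt φ' (-(c * φ x) - μ * twoPhase lp lm 1 (φ x)) x)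
    (x : ℝ) (hx : φ x = 0) (hx' : 0 < φ' x) : False := by
  have hεpos : 0 < μ * lp := mul_pos hμ hlp
  have hD : HasDerivAt φ' 0 x := by
    have := hφ' x
    rw [hx, twoPhase_zero] at this
    simpa using this
  -- φ is positive just to the right of x
  have hsl : Filter.Tendsto (slope φ x) (nhdsWithin x {x}ᶜ) (nhds (φ' x)) :=
    hasDerivAt_iff_tendsto_slope.mp (hφ x)
  have hpos : ∀ᶠ t in nhdsWithin x (Ioi x), 0 < φ t := by
    have h' : ∀ᶠ t in nhdsWithin x {x}ᶜ, 0 < slope φ x t := hsl (Ioi_mem_nhds hx')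
    have h'' : ∀ᶠ t in nhdsWithin x (Ioi x), 0 < slope φ x t :=
      h'.filter_mono (nhdsWithin_mono x (fun t ht => ne_of_gt ht))
    filter_upwards [h'', self_mem_nhdsWithin] with t ht hmem
    have htx : 0 < t - x := sub_pos.mpr hmem
    rw [slope_def_field, hx, sub_zero] at ht
    rcases div_pos_iff.mp ht with ⟨hh1, _⟩ | ⟨_, hh2⟩
    · exact hh1
    · linarith
  -- the slope of φ' is eventually small
  have hsl' : Filter.Tendsto (slope φ' x) (nhdsWithin x {x}ᶜ) (nhds 0) :=
    hasDerivAt_iff_tendsto_slope.mp hD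
  have hsmall : ∀ᶠ t in nhdsWithin x (Ioi x), |slope φ' x t| < μ * lp / 4 := by
    have h' : ∀ᶠ t in nhdsWithin x {x}ᶜ, slope φ' x t ∈ Ioo (-(μ * lp / 4)) (μ * lp / 4) :=
      hsl' (Ioo_mem_nhds (by linarith) (by linarith))
    have h'' := h'.filter_mono (nhdsWithin_mono x (fun t ht => ne_of_gt ht))
    filter_upwards [h''] with t ht
    rw [abs_lt]
    exact ⟨ht.1, ht.2⟩
  -- an interval on which φ is positive
  rw [eventually_iff, mem_nhdsGT_iff_exists_Ioo_subset] at hpos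
  obtain ⟨b, hbx, hb⟩ := hpos
  -- pick a point t in that interval with small slope of φ'
  obtain ⟨t, htsmall, htmem⟩ :=
    (hsmall.and (Filter.eventually_mem_set.mpr (Ioo_mem_nhdsGT_of_mem ⟨le_refl x, hbx⟩))).exists
  have hxt : x < t := htmem.1
  -- mean value theorem on [x, t]
  have hcont : ContinuousOn φ' (Icc x t) := fun u _ => ((hφ' u).continuousAt).continuousWithinAt
  obtain ⟨ξ, hξmem, hξeq⟩ := exists_hasDerivAt_eq_slope φ'
    (fun u => -(c * φ u) - μ * twoPhase lp lm 1 (φ u)) hxt hcont (fun u _ => hφ' u)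
  have hφξ : 0 < φ ξ := hb ⟨hξmem.1, lt_trans hξmem.2 htmem.2⟩
  have hTξ : twoPhase lp lm 1 (φ ξ) = lp := by
    have hzero : (1:ℝ) - 1 = 0 := by norm_num
    simp [twoPhase, hφξ, hzero, Real.rpow_zero]
  rw [hTξ] at hξeq
  rw [slope_def_field] at htsmall
  rw [← hξeq] at htsmall
  have h1 : μ * lp ≤ -(-(c * φ ξ) - μ * lp) := by nlinarith [mul_nonneg hc hφξ.le]
  rcases abs_lt.mp htsmall with ⟨ha, _⟩
  linarith

/-- No transversal zero-crossing at all for `q = 1`, `μ > 0`. -/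
lemma no_cross' {lp lm μ c : ℝ} (hlp : 0 < lp) (hlm : 0 < lm) (hμ : 0 < μ) (hc : 0 ≤ c)
    (φ φ' : ℝ → ℝ)
    (hφ : ∀ x, HasDerivAt φ (φ' x) x)
    (hφ' : ∀ x, HasDerivAt φ' (-(c * φ x) - μ * twoPhase lp lm 1 (φ x)) x)
    (x : ℝ) (hx : φ x = 0) : φ' x = 0 := by
  by_contra hne
  rcases Ne.lt_or_gt hne with h | h
  · -- apply no_cross to -φ
    have hφn : ∀ y, HasDerivAt (fun t => -φ t) (-φ' y) y := fun y => (hφ y).neg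
    have hφ'n : ∀ y, HasDerivAt (fun t => -φ' t)
        (-(c * (-φ y)) - μ * twoPhase lm lp 1 (-φ y)) y := by
      intro y
      have := (hφ' y).neg
      refine (this).congr_deriv ?_
      rw [twoPhase_neg]
      ring
    exact no_cross hlm hμ hc _ _ hφn hφ'n x (by simp [hx]) (by simpa using h)
  · exact no_cross hlp hμ hc φ φ' hφ hφ' x hx h

/-- Let `1 ≤ q < 2`, `λ₊, λ₋ > 0`, `μ ≥ 0`, `γ_q = 2/(2-q)`. A `2π`-periodic
`C¹` solution of `-φ'' - γ_q² φ = μ(λ₊(φ⁺)^{q-1} - λ₋(φ⁻)^{q-1})` with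
`φ(0) = φ'(0) = 0` vanishes identically. -/
theorem periodic_ode_unique_trivial (q lp lm μ : ℝ) (hq1 : 1 ≤ q) (hq2 : q < 2)
    (hlp : 0 < lp) (hlm : 0 < lm) (hμ : 0 ≤ μ)
    (φ φ' : ℝ → ℝ)
    (hper : Function.Periodic φ (2 * Real.pi))
    (hφ : ∀ x, HasDerivAt φ (φ' x) x)
    (hφ' : ∀ x, HasDerivAt φ'
      (-((2 / (2 - q)) ^ 2 * φ x) - μ * twoPhase lp lm q (φ x)) x)
    (h0 : φ 0 = 0) (h0' : φ' 0 = 0) :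
    ∀ x, φ x = 0 := by
  have hq0 : (0:ℝ) < q := by linarith
  have hcpos : (0:ℝ) < (2 / (2 - q)) ^ 2 := by
    have h2q : (0:ℝ) < 2 - q := by linarith
    positivity
  -- the energy has zero derivative everywhere
  have hE : ∀ x, HasDerivAt
      (fun t => φ' t * φ' t / 2 + (2 / (2 - q)) ^ 2 / 2 * (φ t * φ t)
        + μ * Fq lp lm q (φ t)) 0 x := by
    intro x
    have h1 := ((hφ' x).mul (hφ' x)).div_const 2
    have h2 := ((hφ x).mul (hφ x)).const_mul ((2 / (2 - q)) ^ 2 / 2)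
    by_cases hμ0 : μ = 0
    · subst hμ0
      simp only [zero_mul, add_zero]
      refine (h1.add h2).congr_deriv ?_
      ring
    · have hμpos : 0 < μ := lt_of_le_of_ne hμ (Ne.symm hμ0)
      rcases eq_or_lt_of_le hq1 with hq1' | hq1'
      · -- q = 1
        subst hq1'
        by_cases hx : φ x = 0
        · have hx' : φ' x = 0 :=
            no_cross' hlp hlm hμpos hcpos.le φ φ' hφ hφ' x hx
          have hd0 : HasDerivAt φ 0 x := hx' ▸ hφ x
          have h3 := (hasDerivAt_Fq_comp_zero hlp hlm le_rfl hx hd0).const_mul μ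
          refine ((h1.add h2).add h3).congr_deriv ?_
          rw [hx, hx', twoPhase_zero]
          ring
        · have h3 : HasDerivAt (fun t => μ * Fq lp lm 1 (φ t))
              (μ * (twoPhase lp lm 1 (φ x) * φ' x)) x := by
            have := ((hasDerivAt_Fq (lp := lp) (lm := lm) le_rfl hx).comp x (hφ x)).const_mul μ
            simpa [Function.comp_def] using this
          refine ((h1.add h2).add h3).congr_deriv ?_
          ring
      · -- q > 1
        have hFd : HasDerivAt (Fq lp lm q) (twoPhase lp lm q (φ x)) (φ x) := by
          by_cases hx : φ x = 0
          · rw [hx, twoPhase_zero]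
            exact hasDerivAt_Fq_zero hlp hlm hq1'
          · exact hasDerivAt_Fq hq1 hx
        have h3 : HasDerivAt (fun t => μ * Fq lp lm q (φ t))
            (μ * (twoPhase lp lm q (φ x) * φ' x)) x := by
          have := (hFd.comp x (hφ x)).const_mul μ
          simpa [Function.comp_def] using this
        refine ((h1.add h2).add h3).congr_deriv ?_
        ring
  -- the energy is constant, hence zero
  have hE0 : ∀ x, φ' x * φ' x / 2 + (2 / (2 - q)) ^ 2 / 2 * (φ x * φ x)
      + μ * Fq lp lm q (φ x) = 0 := by
    intro x
    have hconst := is_const_of_deriv_eq_zero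
      (f := fun t => φ' t * φ' t / 2 + (2 / (2 - q)) ^ 2 / 2 * (φ t * φ t)
        + μ * Fq lp lm q (φ t))
      (fun y => (hE y).differentiableAt) (fun y => (hE y).deriv) x 0
    rw [hconst, h0, h0', Fq_zero]
    ring
  intro x
  have hx := hE0 x
  have hge : 0 ≤ μ * Fq lp lm q (φ x) := mul_nonneg hμ (Fq_nonneg hlp.le hlm.le hq0 _)
  have hle : φ x * φ x ≤ 0 := by nlinarith [mul_self_nonneg (φ' x)]
  exact mul_self_eq_zero.mp (le_antisymm hle (mul_self_nonneg _))
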